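/- For all integers r ≥ 1 and 1 ≤ j ≤ r, every f ∈ ℂ^N and every t > 0, the modulus of smoothness satisfies ω_r(f, t) ≤ t^j · ω_{r−j}(L^{j/2} f, t). -/

import Mathlib

open Matrix

noncomputable section

/-- Euclidean (2-)norm on `ℂ^N`. -/
def cnorm2 {N : ℕ} (f : Fin N → ℂ) : ℝ := Real.sqrt (∑ i, ‖f i‖ ^ 2)

/-- The spectral operator `Σ_j c_j u_j u_j^*`. -/
def specOp {N : ℕ} (u : Fin N → Fin N → ℂ) (c : Fin N → ℂ) : Matrix (Fin N) (Fin N) ℂ :=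
  ∑ j, c j • Matrix.vecMulVec (u j) (star (u j))

/-- The graph translation operator `T_s = Σ_j e^{i s √λ_j} u_j u_j^*`. -/
def Tmat {N : ℕ} (u : Fin N → Fin N → ℂ) (lam : Fin N → ℝ) (s : ℝ) :
    Matrix (Fin N) (Fin N) ℂ :=
  specOp u (fun j => Complex.exp (Complex.I * (s : ℂ) * (Real.sqrt (lam j) : ℂ)))

/-- The `r`-th modulus of smoothness `ω_r(f,t) = sup_{|s| ≤ t} ‖(T_s - I)^r f‖₂`. -/
def omegaMod {N : ℕ} (u : Fin N → Fin N → ℂ) (lam : Fin N → ℝ) (r : ℕ) (f : Fin N → ℂ)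
    (t : ℝ) : ℝ :=
  ⨆ s : {s : ℝ // |s| ≤ t}, cnorm2 (((Tmat u lam s.1 - 1) ^ r).mulVec f)

/-- Functional calculus power `L^x = Σ_j λ_j^x u_j u_j^*` (with `0^0 = 1`). -/
def Lpow {N : ℕ} (u : Fin N → Fin N → ℂ) (lam : Fin N → ℝ) (x : ℝ) :
    Matrix (Fin N) (Fin N) ℂ :=
  specOp u (fun j => ((lam j ^ x : ℝ) : ℂ))

/- ### Auxiliary lemmas -/

lemma cnorm2_le_mul {n : ℕ} {v w : Fin n → ℂ} {c : ℝ} (hc : 0 ≤ c)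
    (h : ∀ k, ‖v k‖ ≤ c * ‖w k‖) : cnorm2 v ≤ c * cnorm2 w := by
  unfold cnorm2
  rw [← Real.sqrt_sq hc, ← Real.sqrt_mul (by positivity)]
  apply Real.sqrt_le_sqrt
  rw [Finset.mul_sum]
  apply Finset.sum_le_sum; intro k _
  calc ‖v k‖ ^ 2 ≤ (c * ‖w k‖) ^ 2 := by
        apply pow_le_pow_left₀ (norm_nonneg _) (h k)
    _ = c ^ 2 * ‖w k‖ ^ 2 := by ring

lemma sum_norm_sq_eq {n : ℕ} (v : Fin n → ℂ) :
    ∑ i, ‖v i‖ ^ 2 = (star v ⬝ᵥ v).re := by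
  simp only [dotProduct, Pi.star_apply, Complex.re_sum]
  apply Finset.sum_congr rfl
  intro k _
  rw [RCLike.star_def, mul_comm, Complex.mul_conj]
  simp [Complex.sq_norm]

lemma cnorm2_mulVec_eq {n : ℕ} (A : Matrix (Fin n) (Fin n) ℂ) (hA : Aᴴ * A = 1)
    (v : Fin n → ℂ) : cnorm2 (A *ᵥ v) = cnorm2 v := by
  unfold cnorm2
  congr 1
  rw [sum_norm_sq_eq, sum_norm_sq_eq]
  congr 1
  rw [star_mulVec, dotProduct_mulVec, vecMul_vecMul, hA, vecMul_one]

lemma norm_exp_I_mul_sub_one_le (x : ℝ) :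
    ‖Complex.exp (Complex.I * x) - 1‖ ≤ |x| := by
  have key : Complex.exp (Complex.I * x) - 1
      = Complex.exp (Complex.I * (x/2 : ℝ)) *
        (Complex.exp (Complex.I * (x/2 : ℝ)) - Complex.exp (-(Complex.I * (x/2 : ℝ)))) := by
    rw [mul_sub, ← Complex.exp_add, ← Complex.exp_add]
    rw [show Complex.I * (x/2 : ℝ) + Complex.I * (x/2 : ℝ) = Complex.I * x by push_cast; ring]
    rw [show Complex.I * (x/2 : ℝ) + -(Complex.I * (x/2 : ℝ)) = 0 by ring, Complex.exp_zero]
  have hdiff : Complex.exp (Complex.I * (x/2 : ℝ)) - Complex.exp (-(Complex.I * (x/2 : ℝ)))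
      = 2 * (Real.sin (x/2) : ℂ) * Complex.I := by
    rw [show Complex.I * (x/2 : ℝ) = ((x/2 : ℝ) : ℂ) * Complex.I by ring,
      show -(((x/2 : ℝ) : ℂ) * Complex.I) = ((-(x/2) : ℝ) : ℂ) * Complex.I by push_cast; ring,
      Complex.exp_mul_I, Complex.exp_mul_I]
    push_cast
    simp [Complex.cos_neg, Complex.sin_neg, Complex.sin_ofReal_re]
    ring
  rw [key, hdiff, norm_mul]
  have h1 : ‖Complex.exp (Complex.I * (x/2 : ℝ))‖ = 1 := by
    rw [Complex.norm_exp]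
    simp
  rw [h1, one_mul]
  have : ‖(2 : ℂ) * (Real.sin (x/2) : ℂ) * Complex.I‖ = 2 * |Real.sin (x/2)| := by
    rw [norm_mul, norm_mul, Complex.norm_I, mul_one, Complex.norm_real, Real.norm_eq_abs]
    norm_num
  rw [this]
  calc 2 * |Real.sin (x/2)| ≤ 2 * |x/2| := by
        have := Real.abs_sin_le_abs (x := x/2)
        linarith
    _ = |x| := by rw [abs_div]; simp; ring

section mx
variable {n : ℕ} (A : Matrix (Fin n) (Fin n) ℂ)

lemma conjdiag_mul (h1 : Aᴴ * A = 1) (c d : Fin n → ℂ) :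
    (A * diagonal c * Aᴴ) * (A * diagonal d * Aᴴ) = A * diagonal (c * d) * Aᴴ := by
  have : (A * diagonal c * Aᴴ) * (A * diagonal d * Aᴴ)
      = A * diagonal c * (Aᴴ * A) * diagonal d * Aᴴ := by
    simp only [Matrix.mul_assoc]
  rw [this, h1, Matrix.mul_one, Matrix.mul_assoc A, diagonal_mul_diagonal]
  rfl

lemma conjdiag_pow (h1 : Aᴴ * A = 1) (h2 : A * Aᴴ = 1) (c : Fin n → ℂ) (m : ℕ) :
    (A * diagonal c * Aᴴ) ^ m = A * diagonal (c ^ m) * Aᴴ := by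
  induction m with
  | zero =>
      have hd : diagonal ((c ^ 0 : Fin n → ℂ)) = (1 : Matrix (Fin n) (Fin n) ℂ) := by
        rw [pow_zero]; exact diagonal_one
      rw [pow_zero, hd, Matrix.mul_one, h2]
  | succ k ih =>
      rw [pow_succ, ih, conjdiag_mul A h1, ← pow_succ]

lemma conjdiag_sub_one (h2 : A * Aᴴ = 1) (c : Fin n → ℂ) :
    A * diagonal c * Aᴴ - 1 = A * diagonal (c - 1) * Aᴴ := by
  have hd1 : diagonal ((1 : Fin n → ℂ)) = (1 : Matrix (Fin n) (Fin n) ℂ) := diagonal_one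
  have h3 : (1 : Matrix (Fin n) (Fin n) ℂ) = A * diagonal 1 * Aᴴ := by
    rw [hd1, Matrix.mul_one, h2]
  have hd : diagonal c - diagonal (1 : Fin n → ℂ) = diagonal (c - 1) := by
    rw [diagonal_sub]; rfl
  rw [h3, ← Matrix.sub_mul, ← Matrix.mul_sub, hd]

lemma conjdiag_mulVec (c : Fin n → ℂ) (v : Fin n → ℂ) :
    (A * diagonal c * Aᴴ) *ᵥ v = A *ᵥ (fun k => c k * (Aᴴ *ᵥ v) k) := by
  rw [Matrix.mul_assoc, ← Matrix.mulVec_mulVec, ← Matrix.mulVec_mulVec]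
  have : diagonal c *ᵥ (Aᴴ *ᵥ v) = fun k => c k * (Aᴴ *ᵥ v) k := by
    ext k; rw [mulVec_diagonal]
  rw [this]

end mx

lemma specOp_eq {N : ℕ} (u : Fin N → Fin N → ℂ) (c : Fin N → ℂ) :
    specOp u c = (Matrix.of u)ᵀ * diagonal c * ((Matrix.of u)ᵀ)ᴴ := by
  ext a b
  rw [Matrix.mul_apply]
  simp only [Matrix.mul_diagonal, conjTranspose_apply, transpose_apply, of_apply, specOp,
    Matrix.sum_apply, Matrix.smul_apply, vecMulVec_apply, Pi.star_apply, smul_eq_mul]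
  apply Finset.sum_congr rfl
  intro k _
  ring

lemma hAunit {N : ℕ} (u : Fin N → Fin N → ℂ)
    (hu : ∀ i j, star (u i) ⬝ᵥ u j = if i = j then 1 else 0) :
    ((Matrix.of u)ᵀ)ᴴ * (Matrix.of u)ᵀ = 1 := by
  ext i j
  simpa [Matrix.mul_apply, conjTranspose_apply, transpose_apply, of_apply, dotProduct,
    Matrix.one_apply] using hu i j

theorem stmt19
    (N : ℕ) (hN : 2 ≤ N)
    (u : Fin N → Fin N → ℂ)
    (hu : ∀ i j, star (u i) ⬝ᵥ u j = if i = j then 1 else 0)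
    (lam : Fin N → ℝ) (hmono : Monotone lam)
    (hlam0 : lam ⟨0, by omega⟩ = 0) (hlam1 : 0 < lam ⟨1, by omega⟩)
    (r j : ℕ) (hr : 1 ≤ r) (hj1 : 1 ≤ j) (hjr : j ≤ r)
    (f : Fin N → ℂ) (t : ℝ) (ht : 0 < t) :
    omegaMod u lam r f t ≤
      t ^ j * omegaMod u lam (r - j) ((Lpow u lam ((j : ℝ) / 2)).mulVec f) t := by
  have hNpos : 0 < N := by omega
  set A : Matrix (Fin N) (Fin N) ℂ := (Matrix.of u)ᵀ with hAdef
  have h1 : Aᴴ * A = 1 := hAunit u hu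
  have h2 : A * Aᴴ = 1 := mul_eq_one_comm.mp h1
  have hspec : ∀ c : Fin N → ℂ, specOp u c = A * diagonal c * Aᴴ := fun c => specOp_eq u c
  set g : Fin N → ℂ := Aᴴ *ᵥ f with hg
  have hlamnn : ∀ k : Fin N, 0 ≤ lam k := by
    intro k
    rw [← hlam0]
    exact hmono (by simp [Fin.le_def])
  have hsq : ∀ k : Fin N, Real.sqrt (lam k) ^ j = lam k ^ ((j : ℝ) / 2) := by
    intro k
    rw [← Real.rpow_natCast (Real.sqrt (lam k)) j, Real.sqrt_eq_rpow,
      ← Real.rpow_mul (hlamnn k)]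
    congr 1
    ring
  -- diagonal views
  have hTview : ∀ s : ℝ, ((Tmat u lam s - 1) ^ r) *ᵥ f
      = A *ᵥ (fun k => (Complex.exp (Complex.I * (s : ℂ) * (Real.sqrt (lam k) : ℂ)) - 1) ^ r
          * g k) := by
    intro s
    rw [Tmat, hspec, conjdiag_sub_one A h2, conjdiag_pow A h1 h2, conjdiag_mulVec]
    congr 1
  have hLview : ∀ s : ℝ, ((Tmat u lam s - 1) ^ (r - j)) *ᵥ ((Lpow u lam ((j:ℝ)/2)) *ᵥ f)
      = A *ᵥ (fun k => (Complex.exp (Complex.I * (s : ℂ) * (Real.sqrt (lam k) : ℂ)) - 1) ^ (r - j)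
          * ((lam k ^ ((j:ℝ)/2) : ℝ) : ℂ) * g k) := by
    intro s
    rw [Matrix.mulVec_mulVec, Tmat, Lpow, hspec, hspec, conjdiag_sub_one A h2,
      conjdiag_pow A h1 h2, conjdiag_mul A h1, conjdiag_mulVec]
    congr 1
  -- the pointwise-in-s inequality
  have key : ∀ s : ℝ, |s| ≤ t →
      cnorm2 (((Tmat u lam s - 1) ^ r) *ᵥ f)
        ≤ t ^ j * cnorm2 (((Tmat u lam s - 1) ^ (r - j)) *ᵥ ((Lpow u lam ((j:ℝ)/2)) *ᵥ f)) := by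
    intro s hs
    rw [hTview s, hLview s, cnorm2_mulVec_eq A h1, cnorm2_mulVec_eq A h1]
    apply cnorm2_le_mul (pow_nonneg ht.le j)
    intro k
    set z : ℂ := Complex.exp (Complex.I * (s : ℂ) * (Real.sqrt (lam k) : ℂ)) - 1 with hz
    have hz2 : ‖z‖ ≤ t * Real.sqrt (lam k) := by
      have harg : Complex.I * (s : ℂ) * (Real.sqrt (lam k) : ℂ)
          = Complex.I * ((s * Real.sqrt (lam k) : ℝ) : ℂ) := by push_cast; ring
      calc ‖z‖ ≤ |s * Real.sqrt (lam k)| := by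
            rw [hz, harg]; exact norm_exp_I_mul_sub_one_le _
        _ = |s| * Real.sqrt (lam k) := by
            rw [abs_mul, abs_of_nonneg (Real.sqrt_nonneg _)]
        _ ≤ t * Real.sqrt (lam k) :=
            mul_le_mul_of_nonneg_right hs (Real.sqrt_nonneg _)
    have hnlp : ‖((lam k ^ ((j:ℝ)/2) : ℝ) : ℂ)‖ = lam k ^ ((j:ℝ)/2) := by
      rw [Complex.norm_real, Real.norm_eq_abs, abs_of_nonneg (Real.rpow_nonneg (hlamnn k) _)]
    rw [norm_mul, norm_mul, norm_mul, norm_pow, norm_pow]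
    calc ‖z‖ ^ r * ‖g k‖ = ‖z‖ ^ j * (‖z‖ ^ (r - j) * ‖g k‖) := by
          rw [← mul_assoc, ← pow_add, Nat.add_sub_cancel' hjr]
      _ ≤ (t * Real.sqrt (lam k)) ^ j * (‖z‖ ^ (r - j) * ‖g k‖) := by
          apply mul_le_mul_of_nonneg_right (pow_le_pow_left₀ (norm_nonneg _) hz2 j)
          positivity
      _ = t ^ j * (‖z‖ ^ (r - j) * ‖((lam k ^ ((j:ℝ)/2) : ℝ) : ℂ)‖ * ‖g k‖) := by
          rw [mul_pow, hsq k, hnlp]; ring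
  -- assembling the supremum argument
  haveI : Nonempty {s : ℝ // |s| ≤ t} := ⟨⟨0, by simpa using ht.le⟩⟩
  have hbdd : BddAbove (Set.range (fun σ : {s : ℝ // |s| ≤ t} =>
      cnorm2 (((Tmat u lam σ.1 - 1) ^ (r - j)).mulVec ((Lpow u lam ((j:ℝ)/2)).mulVec f)))) := by
    refine ⟨(2 : ℝ) ^ (r - j) * cnorm2 (fun k => ((lam k ^ ((j:ℝ)/2) : ℝ) : ℂ) * g k), ?_⟩
    rintro x ⟨σ, rfl⟩
    dsimp only
    rw [hLview σ.1, cnorm2_mulVec_eq A h1]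
    apply cnorm2_le_mul (by positivity)
    intro k
    rw [norm_mul, norm_mul, norm_mul, norm_pow]
    have hz1 : ‖Complex.exp (Complex.I * (σ.1 : ℂ) * (Real.sqrt (lam k) : ℂ)) - 1‖ ≤ 2 := by
      calc ‖Complex.exp (Complex.I * (σ.1 : ℂ) * (Real.sqrt (lam k) : ℂ)) - 1‖
          ≤ ‖Complex.exp (Complex.I * (σ.1 : ℂ) * (Real.sqrt (lam k) : ℂ))‖ + ‖(1 : ℂ)‖ :=
            norm_sub_le _ _
        _ = 2 := by
            rw [Complex.norm_exp]
            norm_num [Complex.mul_re, Complex.mul_im]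
    calc ‖Complex.exp (Complex.I * (σ.1 : ℂ) * (Real.sqrt (lam k) : ℂ)) - 1‖ ^ (r - j)
          * ‖((lam k ^ ((j:ℝ)/2) : ℝ) : ℂ)‖ * ‖g k‖
        ≤ 2 ^ (r - j) * ‖((lam k ^ ((j:ℝ)/2) : ℝ) : ℂ)‖ * ‖g k‖ := by
          have := pow_le_pow_left₀ (norm_nonneg _) hz1 (r - j)
          have h0 : (0:ℝ) ≤ ‖((lam k ^ ((j:ℝ)/2) : ℝ) : ℂ)‖ * ‖g k‖ := by positivity
          nlinarith [norm_nonneg (g k), norm_nonneg ((((lam k ^ ((j:ℝ)/2) : ℝ)) : ℂ))]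
      _ = 2 ^ (r - j) * (‖((lam k ^ ((j:ℝ)/2) : ℝ) : ℂ)‖ * ‖g k‖) := by ring
  unfold omegaMod
  apply ciSup_le
  intro σ
  calc cnorm2 (((Tmat u lam σ.1 - 1) ^ r).mulVec f)
      ≤ t ^ j * cnorm2 (((Tmat u lam σ.1 - 1) ^ (r - j)).mulVec
          ((Lpow u lam ((j:ℝ)/2)).mulVec f)) := key σ.1 σ.2
    _ ≤ t ^ j * ⨆ σ' : {s : ℝ // |s| ≤ t},
          cnorm2 (((Tmat u lam σ'.1 - 1) ^ (r - j)).mulVec ((Lpow u lam ((j:ℝ)/2)).mulVec f)) :=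
        mul_le_mul_of_nonneg_left (le_ciSup hbdd σ) (pow_nonneg ht.le j)
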